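/- arXiv:1905.00144 — 4 statements merged into one kernel-verified Lean document; each statement's English description precedes it below -/
import Mathlib

section
/- Let S ⊂ R^n be measurable with 0 < |S| < ∞ and let f₁, f₂ ∈ L^1(S) be real-valued. Set f = min(f₁, f₂) (pointwise). Then ⨍_S |f - f_S| ≤ ⨍_S |f₁ - (f₁)_S| + ⨍_S |f₂ - (f₂)_S|. -/
open MeasureTheory

lemma minmax_key (a b m m₁ m₂ : ℝ) (h1 : m ≤ m₁) (h2 : m ≤ m₂) :
    max (m - min a b) 0 ≤ max (m₁ - a) 0 + max (m₂ - b) 0 := by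
  have hnn : (0:ℝ) ≤ max (m₁ - a) 0 + max (m₂ - b) 0 :=
    add_nonneg (le_max_right _ _) (le_max_right _ _)
  apply max_le _ hnn
  rcases le_total a b with h | h
  · rw [min_eq_left h]
    calc m - a ≤ m₁ - a := by linarith
      _ ≤ max (m₁ - a) 0 := le_max_left _ _
      _ ≤ _ := le_add_of_nonneg_right (le_max_right _ _)
  · rw [min_eq_right h]
    calc m - b ≤ m₂ - b := by linarith
      _ ≤ max (m₂ - b) 0 := le_max_left _ _
      _ ≤ _ := le_add_of_nonneg_left (le_max_right _ _)

/-- For integrable g on S with mean m, `∫ |g - m| = 2 ∫ (m - g)⁺`. -/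
lemma abs_mean_eq {α : Type*} [MeasurableSpace α] {μ : Measure α} {S : Set α}
    {g : α → ℝ} (hg : IntegrableOn g S μ) (hμ : (μ S).toReal ≠ 0) (hfin : μ S ≠ ⊤) :
    (∫ x in S, |g x - ⨍ y in S, g y ∂μ| ∂μ)
      = 2 * ∫ x in S, max ((⨍ y in S, g y ∂μ) - g x) 0 ∂μ := by
  set m := ⨍ y in S, g y ∂μ with hm
  have hconst : ∀ c : ℝ, IntegrableOn (fun _ => c) S μ := fun c =>
    integrableOn_const hfin
  have hmz : ∫ x in S, (g x - m) ∂μ = 0 := by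
    rw [integral_sub hg (hconst m), setIntegral_const]
    rw [hm, setAverage_eq]
    simp only [smul_eq_mul]
    field_simp
    rw [div_self (show μ.real S ≠ 0 from hμ)]; ring
  have hint1 : IntegrableOn (fun x => g x - m) S μ := hg.sub (hconst m)
  have hint2 : IntegrableOn (fun x => max (m - g x) 0) S μ := by
    have := hint1.neg.pos_part
    simpa [neg_sub, IntegrableOn] using this
  have hpt : ∀ x, |g x - m| = 2 * max (m - g x) 0 + (g x - m) := by
    intro x
    rcases le_total (g x) m with h | h
    · rw [abs_of_nonpos (by linarith), max_eq_left (by linarith)]; ring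
    · rw [abs_of_nonneg (by linarith), max_eq_right (by linarith)]; ring
  calc (∫ x in S, |g x - m| ∂μ)
      = ∫ x in S, (2 * max (m - g x) 0 + (g x - m)) ∂μ :=
        integral_congr_ae (Filter.Eventually.of_forall fun x => hpt x)
    _ = 2 * (∫ x in S, max (m - g x) 0 ∂μ) + ∫ x in S, (g x - m) ∂μ := by
        rw [integral_add (hint2.const_mul 2) hint1, integral_const_mul]
    _ = 2 * ∫ x in S, max (m - g x) 0 ∂μ := by rw [hmz]; ring

/-- For `f = min(f₁, f₂)` pointwise,
`⨍_S |f - f_S| ≤ ⨍_S |f₁ - (f₁)_S| + ⨍_S |f₂ - (f₂)_S|`. -/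
theorem stmt_11 (n : ℕ)
    (S : Set (EuclideanSpace ℝ (Fin n))) (hS : MeasurableSet S)
    (h0 : 0 < volume S) (hfin : volume S < ⊤)
    (f₁ f₂ : EuclideanSpace ℝ (Fin n) → ℝ)
    (hf₁ : IntegrableOn f₁ S) (hf₂ : IntegrableOn f₂ S) :
    (⨍ x in S, |min (f₁ x) (f₂ x) - ⨍ y in S, min (f₁ y) (f₂ y)|)
      ≤ (⨍ x in S, |f₁ x - ⨍ y in S, f₁ y|) + ⨍ x in S, |f₂ x - ⨍ y in S, f₂ y| := by
  have hμpos : 0 < (volume S).toReal := ENNReal.toReal_pos h0.ne' hfin.ne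
  have hμ : (volume S).toReal ≠ 0 := hμpos.ne'
  have hconst : ∀ c : ℝ, IntegrableOn (fun _ => c) S := fun c =>
    integrableOn_const hfin.ne
  set f : EuclideanSpace ℝ (Fin n) → ℝ := fun x => min (f₁ x) (f₂ x) with hfdef
  have hfint : IntegrableOn f S := hf₁.inf hf₂
  set m := ⨍ y in S, f y with hm
  set m₁ := ⨍ y in S, f₁ y with hm₁
  set m₂ := ⨍ y in S, f₂ y with hm₂
  have havg : ∀ (g h : EuclideanSpace ℝ (Fin n) → ℝ), IntegrableOn g S → IntegrableOn h S →
      (∀ x, g x ≤ h x) → (⨍ y in S, g y) ≤ ⨍ y in S, h y := by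
    intro g h hg hh hle
    rw [setAverage_eq, setAverage_eq]
    simp only [smul_eq_mul]
    gcongr
    · exact hS.nullMeasurableSet
    · exact hle _
  have h1 : m ≤ m₁ := havg f f₁ hfint hf₁ fun x => min_le_left _ _
  have h2 : m ≤ m₂ := havg f f₂ hfint hf₂ fun x => min_le_right _ _
  rw [show (⨍ x in S, |min (f₁ x) (f₂ x) - ⨍ y in S, min (f₁ y) (f₂ y)|)
        = ⨍ x in S, |f x - m| from rfl]
  rw [setAverage_eq, setAverage_eq, setAverage_eq]
  simp only [smul_eq_mul, ← mul_add]
  gcongr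
  rw [abs_mean_eq hfint hμ hfin.ne, abs_mean_eq hf₁ hμ hfin.ne,
    abs_mean_eq hf₂ hμ hfin.ne, ← mul_add]
  gcongr
  have hint1 : IntegrableOn (fun x => max (m₁ - f₁ x) 0) S := by
    simpa [neg_sub, IntegrableOn] using (hf₁.sub (hconst m₁)).neg.pos_part
  have hint2 : IntegrableOn (fun x => max (m₂ - f₂ x) 0) S := by
    simpa [neg_sub, IntegrableOn] using (hf₂.sub (hconst m₂)).neg.pos_part
  calc (∫ x in S, max (m - f x) 0)
      ≤ ∫ x in S, (max (m₁ - f₁ x) 0 + max (m₂ - f₂ x) 0) := by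
        apply setIntegral_mono_on _ (hint1.add hint2) hS
        · intro x _; exact minmax_key (f₁ x) (f₂ x) m m₁ m₂ h1 h2
        · simpa [neg_sub, IntegrableOn] using (hfint.sub (hconst m)).neg.pos_part
    _ = (∫ x in S, max (m₁ - f₁ x) 0) + ∫ x in S, max (m₂ - f₂ x) 0 :=
        integral_add hint1 hint2
end

section
/- Let S ⊂ R^n be measurable with 0 < |S| < ∞ and let f₁, f₂ ∈ L^2(S) be real-valued. Set f = max(f₁, f₂) (pointwise). Then ⨍_S |f - f_S|^2 ≤ ⨍_S |f₁ - (f₁)_S|^2 + ⨍_S |f₂ - (f₂)_S|^2. -/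
open MeasureTheory

/-- Variance minimization: the average minimizes the mean squared deviation. -/
lemma aux_var_min {α : Type*} [MeasurableSpace α] (μ : Measure α) [IsFiniteMeasure μ]
    (g : α → ℝ) (hg : MemLp g 2 μ) (c : ℝ) :
    ∫ x, (g x - ⨍ y, g y ∂μ) ^ 2 ∂μ ≤ ∫ x, (g x - c) ^ 2 ∂μ := by
  set m := ⨍ y, g y ∂μ with hm
  have hgi : Integrable g μ := hg.integrable one_le_two
  have hgm2 : Integrable (fun x => (g x - m) ^ 2) μ :=
    (hg.sub (memLp_const m)).integrable_sq
  have hgm : Integrable (fun x => g x - m) μ := hgi.sub (integrable_const m)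
  have h1 : ∫ x, (g x - c) ^ 2 ∂μ
      = ∫ x, ((g x - m) ^ 2 + (2 * (m - c)) * (g x - m) + (m - c) ^ 2) ∂μ := by
    congr 1; funext x; ring
  have hsum : Integrable (fun x => (g x - m) ^ 2 + 2 * (m - c) * (g x - m)) μ :=
    hgm2.add (hgm.const_mul _)
  rw [h1, integral_add hsum (integrable_const _),
    integral_add hgm2 (hgm.const_mul _), integral_const_mul, integral_sub_average,
    integral_const]
  have hT : (0:ℝ) ≤ (μ Set.univ).toReal := ENNReal.toReal_nonneg
  simp only [smul_eq_mul]
  nlinarith [mul_nonneg (measureReal_nonneg (μ := μ) (s := Set.univ)) (sq_nonneg (m - c))]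

/-- For `f = max(f₁, f₂)` pointwise,
`⨍_S |f - f_S|² ≤ ⨍_S |f₁ - (f₁)_S|² + ⨍_S |f₂ - (f₂)_S|²`. -/
theorem stmt_12 (n : ℕ)
    (S : Set (EuclideanSpace ℝ (Fin n))) (hS : MeasurableSet S)
    (h0 : 0 < volume S) (hfin : volume S < ⊤)
    (f₁ f₂ : EuclideanSpace ℝ (Fin n) → ℝ)
    (hf₁ : MemLp f₁ 2 (volume.restrict S)) (hf₂ : MemLp f₂ 2 (volume.restrict S)) :
    (⨍ x in S, |max (f₁ x) (f₂ x) - ⨍ y in S, max (f₁ y) (f₂ y)| ^ 2)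
      ≤ (⨍ x in S, |f₁ x - ⨍ y in S, f₁ y| ^ 2) + ⨍ x in S, |f₂ x - ⨍ y in S, f₂ y| ^ 2 := by
  set μ := volume.restrict S with hμdef
  haveI : IsFiniteMeasure μ := ⟨by simpa [hμdef] using hfin⟩
  have hf : MemLp (fun x => max (f₁ x) (f₂ x)) 2 μ := by
    simpa [Pi.sup_def] using hf₁.sup hf₂
  set m1 := ⨍ y in S, f₁ y with hm1
  set m2 := ⨍ y in S, f₂ y with hm2
  set m := ⨍ y in S, max (f₁ y) (f₂ y) with hm
  set c := max m1 m2 with hc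
  -- integrability facts
  have h1sq : Integrable (fun x => (f₁ x - m1) ^ 2) μ :=
    (hf₁.sub (memLp_const m1)).integrable_sq
  have h2sq : Integrable (fun x => (f₂ x - m2) ^ 2) μ :=
    (hf₂.sub (memLp_const m2)).integrable_sq
  have hfcsq : Integrable (fun x => (max (f₁ x) (f₂ x) - c) ^ 2) μ :=
    (hf.sub (memLp_const c)).integrable_sq
  -- pointwise bound
  have hpt : ∀ x, (max (f₁ x) (f₂ x) - c) ^ 2 ≤ (f₁ x - m1) ^ 2 + (f₂ x - m2) ^ 2 := by
    intro x
    have h := abs_max_sub_max_le_max (f₁ x) (f₂ x) m1 m2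
    have h2 : (max (f₁ x) (f₂ x) - c) ^ 2 ≤ (max |f₁ x - m1| |f₂ x - m2|) ^ 2 := by
      rw [← sq_abs]
      exact pow_le_pow_left₀ (abs_nonneg _) h 2
    rcases le_total |f₁ x - m1| |f₂ x - m2| with hle | hle
    · rw [max_eq_right hle] at h2
      nlinarith [sq_abs (f₂ x - m2), sq_nonneg (f₁ x - m1)]
    · rw [max_eq_left hle] at h2
      nlinarith [sq_abs (f₁ x - m1), sq_nonneg (f₂ x - m2)]
  -- main integral inequality
  have key : ∫ x, (max (f₁ x) (f₂ x) - m) ^ 2 ∂μ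
      ≤ (∫ x, (f₁ x - m1) ^ 2 ∂μ) + ∫ x, (f₂ x - m2) ^ 2 ∂μ := by
    have step1 : ∫ x, (max (f₁ x) (f₂ x) - m) ^ 2 ∂μ
        ≤ ∫ x, (max (f₁ x) (f₂ x) - c) ^ 2 ∂μ := by
      have := aux_var_min μ (fun x => max (f₁ x) (f₂ x)) hf c
      simpa [hm, hμdef] using this
    have step2 : ∫ x, (max (f₁ x) (f₂ x) - c) ^ 2 ∂μ
        ≤ ∫ x, ((f₁ x - m1) ^ 2 + (f₂ x - m2) ^ 2) ∂μ :=
      integral_mono hfcsq (h1sq.add h2sq) fun x => hpt x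
    calc ∫ x, (max (f₁ x) (f₂ x) - m) ^ 2 ∂μ
        ≤ ∫ x, ((f₁ x - m1) ^ 2 + (f₂ x - m2) ^ 2) ∂μ := step1.trans step2
      _ = (∫ x, (f₁ x - m1) ^ 2 ∂μ) + ∫ x, (f₂ x - m2) ^ 2 ∂μ := integral_add h1sq h2sq
  -- pass from integrals to averages
  have hinv : (0:ℝ) ≤ (volume S).toReal⁻¹ := by positivity
  simp only [sq_abs]
  rw [setAverage_eq, setAverage_eq, setAverage_eq]
  rw [smul_eq_mul, smul_eq_mul, smul_eq_mul, ← mul_add]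
  exact mul_le_mul_of_nonneg_left key hinv
end

section
/- Let S ⊂ R^n be measurable with 0 < |S| < ∞, f ∈ L^1(S) real-valued, and k ∈ R. Let f^k = min(f, k) be the truncation of f from above at level k. Then ⨍_S |f^k - (f^k)_S| ≤ ⨍_S |f - f_S|. -/
open MeasureTheory

private lemma aux_abs_eq {α : Type*} [MeasurableSpace α] (ν : Measure α)
    (g : α → ℝ) (hg : Integrable g ν) (c : ℝ) (hc : Integrable (fun _ => c) ν)
    (h0 : ∫ x, (g x - c) ∂ν = 0) :
    ∫ x, |g x - c| ∂ν = 2 * ∫ x, max (c - g x) 0 ∂ν := by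
  have hsub : Integrable (fun x => g x - c) ν := hg.sub hc
  have hmax : Integrable (fun x => max (c - g x) 0) ν := by
    exact (hc.sub hg).sup (integrable_zero _ _ ν)
  have hpt : ∀ x, |g x - c| = 2 * max (c - g x) 0 + (g x - c) := by
    intro x
    rcases le_total (g x) c with h | h
    · rw [abs_of_nonpos (by linarith), max_eq_left (by linarith)]; ring
    · rw [abs_of_nonneg (by linarith), max_eq_right (by linarith)]; ring
  calc ∫ x, |g x - c| ∂ν = ∫ x, (2 * max (c - g x) 0 + (g x - c)) ∂ν := by
        simp only [hpt]
    _ = 2 * ∫ x, max (c - g x) 0 ∂ν + ∫ x, (g x - c) ∂ν := by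
        rw [integral_add (hmax.const_mul 2) hsub, integral_const_mul]
    _ = 2 * ∫ x, max (c - g x) 0 ∂ν := by rw [h0, add_zero]

/-- For the upper truncation `f^k = min(f, k)`,
`⨍_S |f^k - (f^k)_S| ≤ ⨍_S |f - f_S|`. -/
theorem stmt_13 (n : ℕ)
    (S : Set (EuclideanSpace ℝ (Fin n))) (hS : MeasurableSet S)
    (h0 : 0 < volume S) (hfin : volume S < ⊤)
    (f : EuclideanSpace ℝ (Fin n) → ℝ) (hf : IntegrableOn f S)
    (k : ℝ) :
    (⨍ x in S, |min (f x) k - ⨍ y in S, min (f y) k|)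
      ≤ ⨍ x in S, |f x - ⨍ y in S, f y| := by
  set ν := volume.restrict S with hν
  have hνuniv : ν Set.univ = volume S := by
    rw [hν, Measure.restrict_apply_univ]
  have hT : (0:ℝ) < (volume S).toReal := ENNReal.toReal_pos h0.ne' hfin.ne
  have hck : Integrable (fun _ => k) ν :=
    integrable_const_iff.2 (Or.inr ⟨by rw [hνuniv]; exact hfin⟩)
  have hfk : Integrable (fun x => min (f x) k) ν := by
    exact hf.inf hck
  set c1 : ℝ := ⨍ y in S, f y with hc1
  set c2 : ℝ := ⨍ y in S, min (f y) k with hc2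
  -- zero-mean facts
  have hzero : ∀ (g : EuclideanSpace ℝ (Fin n) → ℝ), Integrable g ν →
      ∫ x, (g x - ⨍ y in S, g y) ∂ν = 0 := by
    intro g hg
    have hcint : Integrable (fun _ => (⨍ y in S, g y)) ν :=
      integrable_const_iff.2 (Or.inr ⟨by rw [hνuniv]; exact hfin⟩)
    rw [integral_sub hg hcint, integral_const, measureReal_def, hνuniv, setAverage_eq, measureReal_def, smul_eq_mul,
      smul_eq_mul]
    field_simp
    exact sub_self _
  have hcint1 : Integrable (fun _ => c1) ν :=
    integrable_const_iff.2 (Or.inr ⟨by rw [hνuniv]; exact hfin⟩)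
  have hcint2 : Integrable (fun _ => c2) ν :=
    integrable_const_iff.2 (Or.inr ⟨by rw [hνuniv]; exact hfin⟩)
  -- c2 ≤ c1
  have hc2c1 : c2 ≤ c1 := by
    rw [hc1, hc2, setAverage_eq, setAverage_eq, smul_eq_mul, smul_eq_mul]
    exact mul_le_mul_of_nonneg_left
      (integral_mono hfk hf (fun x => min_le_left _ _))
      (inv_nonneg.2 ENNReal.toReal_nonneg)
  -- c2 ≤ k
  have hc2k : c2 ≤ k := by
    rw [hc2, setAverage_eq, smul_eq_mul]
    have h1 : ∫ y in S, min (f y) k ≤ k * (volume S).toReal := by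
      have := integral_mono hfk hck (fun x => min_le_right _ _)
      simpa [integral_const, measureReal_def, hνuniv, mul_comm] using this
    calc ((volume S).toReal)⁻¹ * ∫ y in S, min (f y) k
        ≤ ((volume S).toReal)⁻¹ * (k * (volume S).toReal) :=
          mul_le_mul_of_nonneg_left h1 (inv_nonneg.2 ENNReal.toReal_nonneg)
      _ = k := by field_simp
  -- pointwise inequality
  have hpt : ∀ x, max (c2 - min (f x) k) 0 ≤ max (c1 - f x) 0 := by
    intro x
    rcases le_total (f x) k with h | h
    · rw [min_eq_left h]
      exact max_le_max (by linarith) le_rfl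
    · rw [min_eq_right h]
      exact le_trans (by simp [max_eq_right]; linarith) (le_max_right _ _)
  -- integrability of max functions
  have hmax1 : Integrable (fun x => max (c2 - min (f x) k) 0) ν := by
    exact (hcint2.sub hfk).sup (integrable_zero _ _ ν)
  have hmax2 : Integrable (fun x => max (c1 - f x) 0) ν := by
    exact (hcint1.sub hf).sup (integrable_zero _ _ ν)
  -- conclude
  have key1 : ∫ x, |min (f x) k - c2| ∂ν = 2 * ∫ x, max (c2 - min (f x) k) 0 ∂ν :=
    aux_abs_eq ν _ hfk c2 hcint2 (hzero _ hfk)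
  have key2 : ∫ x, |f x - c1| ∂ν = 2 * ∫ x, max (c1 - f x) 0 ∂ν :=
    aux_abs_eq ν _ hf c1 hcint1 (hzero _ hf)
  have hineq : ∫ x, |min (f x) k - c2| ∂ν ≤ ∫ x, |f x - c1| ∂ν := by
    rw [key1, key2]
    have := integral_mono hmax1 hmax2 hpt
    linarith
  rw [setAverage_eq, setAverage_eq, smul_eq_mul, smul_eq_mul]
  exact mul_le_mul_of_nonneg_left hineq (inv_nonneg.2 ENNReal.toReal_nonneg)
end

section
/- Let Ω = X × Y where X ⊂ R^m and Y ⊂ R^l are measurable, and let S ⊂ X, T ⊂ Y be measurable with finite positive measures; set R = S × T. Let f ∈ L^p(R), 1 ≤ p < ∞. Suppose that for a.e. y ∈ T the slice f_y = f(·, y) satisfies (⨍_S |f_y - (f_y)_S|^p)^{1/p} ≤ A, and for a.e. x ∈ S the slice f_x = f(x, ·) satisfies (⨍_T |f_x - (f_x)_T|^p)^{1/p} ≤ B. Then (⨍_R |f - f_R|^p)^{1/p} ≤ A + B. -/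
open MeasureTheory ENNReal NNReal

private lemma aux_lintegral_le {α : Type*} [MeasurableSpace α] {μ : Measure α}
    {p : ℝ} (hp0 : 0 < p) {w : α → ℝ} (hw : MemLp w (ENNReal.ofReal p) μ)
    {A : ℝ} (hAw : (∫ a, |w a| ^ p ∂μ) ^ (1 / p) ≤ A) :
    ∫⁻ a, (‖w a‖₊ : ℝ≥0∞) ^ p ∂μ ≤ ENNReal.ofReal (A ^ p) := by
  have hpe0 : (ENNReal.ofReal p) ≠ 0 := by
    simp only [ne_eq, ENNReal.ofReal_eq_zero, not_le]; exact hp0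
  have hpet : (ENNReal.ofReal p) ≠ ⊤ := ENNReal.ofReal_ne_top
  have hint : Integrable (fun a => |w a| ^ p) μ := by
    have := hw.integrable_norm_rpow hpe0 hpet
    simpa [ENNReal.toReal_ofReal hp0.le, Real.norm_eq_abs] using this
  have hX0 : 0 ≤ ∫ a, |w a| ^ p ∂μ :=
    integral_nonneg fun a => Real.rpow_nonneg (abs_nonneg _) _
  have hXle : ∫ a, |w a| ^ p ∂μ ≤ A ^ p := by
    have h1 : ∫ a, |w a| ^ p ∂μ = ((∫ a, |w a| ^ p ∂μ) ^ (1 / p)) ^ p := by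
      rw [← Real.rpow_mul hX0, one_div_mul_cancel hp0.ne', Real.rpow_one]
    rw [h1]
    exact Real.rpow_le_rpow (Real.rpow_nonneg hX0 _) hAw hp0.le
  have key : ENNReal.ofReal (∫ a, |w a| ^ p ∂μ) = ∫⁻ a, (‖w a‖₊ : ℝ≥0∞) ^ p ∂μ := by
    rw [ofReal_integral_eq_lintegral_ofReal hint
      (Filter.Eventually.of_forall fun a => Real.rpow_nonneg (abs_nonneg _) _)]
    refine lintegral_congr fun a => ?_
    rw [← ENNReal.ofReal_rpow_of_nonneg (abs_nonneg _) hp0.le, ← Real.norm_eq_abs,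
      ofReal_norm, enorm_eq_nnnorm]
  rw [← key]
  exact ENNReal.ofReal_le_ofReal hXle

private lemma ae_slice_lt_top {α β : Type*} [MeasurableSpace α] [MeasurableSpace β]
    {μ : Measure α} {ν : Measure β} [SFinite ν] {F : α × β → ℝ≥0∞}
    (hF : AEMeasurable F (μ.prod ν)) (hfin : ∫⁻ z, F z ∂(μ.prod ν) ≠ ⊤) :
    ∀ᵐ x ∂μ, ∫⁻ y, F (x, y) ∂ν < ⊤ := by
  have h2 : ∫⁻ x, ∫⁻ y, hF.mk F (x, y) ∂ν ∂μ ≠ ⊤ := by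
    rw [← lintegral_prod _ hF.measurable_mk.aemeasurable, ← lintegral_congr_ae hF.ae_eq_mk]
    exact hfin
  have h3 := ae_lt_top hF.measurable_mk.lintegral_prod_right' h2
  filter_upwards [h3, Measure.ae_ae_of_ae_prod hF.ae_eq_mk] with x h1 h4
  rwa [lintegral_congr_ae h4]

private lemma key_prob {α β : Type*} [MeasurableSpace α] [MeasurableSpace β]
    (P : Measure α) (Q : Measure β) [IsProbabilityMeasure P] [IsProbabilityMeasure Q]
    {p : ℝ} (hp : 1 ≤ p) (f : α × β → ℝ)
    (hf : MemLp f (ENNReal.ofReal p) (P.prod Q)) {A B : ℝ}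
    (hA : ∀ᵐ y ∂Q, (∫ x, |f (x, y) - ∫ x', f (x', y) ∂P| ^ p ∂P) ^ (1 / p) ≤ A)
    (hB : ∀ᵐ x ∂P, (∫ y, |f (x, y) - ∫ y', f (x, y') ∂Q| ^ p ∂Q) ^ (1 / p) ≤ B) :
    (∫ z, |f z - ∫ w, f w ∂(P.prod Q)| ^ p ∂(P.prod Q)) ^ (1 / p) ≤ A + B := by
  have hp0 : 0 < p := lt_of_lt_of_le one_pos hp
  have hpe0 : (ENNReal.ofReal p) ≠ 0 := by
    simp only [ne_eq, ENNReal.ofReal_eq_zero, not_le]; exact hp0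
  have hpet : (ENNReal.ofReal p) ≠ ⊤ := ENNReal.ofReal_ne_top
  have hpR : (ENNReal.ofReal p).toReal = p := ENNReal.toReal_ofReal hp0.le
  have hpe1 : (1 : ℝ≥0∞) ≤ ENNReal.ofReal p := by
    rw [← ENNReal.ofReal_one]; exact ENNReal.ofReal_le_ofReal hp
  set pe := ENNReal.ofReal p with hpe
  set ν := P.prod Q with hν
  haveI : (ae Q).NeBot := by
    refine ae_neBot.mpr ?_
    intro h0
    have h1 : Q Set.univ = 1 := measure_univ
    rw [h0] at h1; simp at h1
  haveI : (ae P).NeBot := by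
    refine ae_neBot.mpr ?_
    intro h0
    have h1 : P Set.univ = 1 := measure_univ
    rw [h0] at h1; simp at h1
  have hA0 : 0 ≤ A := by
    obtain ⟨y, hy⟩ := hA.exists
    exact le_trans (Real.rpow_nonneg
      (integral_nonneg fun x => Real.rpow_nonneg (abs_nonneg _) _) _) hy
  have hB0 : 0 ≤ B := by
    obtain ⟨x, hx⟩ := hB.exists
    exact le_trans (Real.rpow_nonneg
      (integral_nonneg fun y => Real.rpow_nonneg (abs_nonneg _) _) _) hx
  set g : β → ℝ := fun y => ∫ x, f (x, y) ∂P with hg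
  set h : α → ℝ := fun x => ∫ y, f (x, y) ∂Q with hh
  set c : ℝ := ∫ z, f z ∂ν with hcdef
  have hfm : AEStronglyMeasurable f ν := hf.aestronglyMeasurable
  have hfi : Integrable f ν := hf.integrable hpe1
  have hfswapm : AEStronglyMeasurable (fun z : β × α => f z.swap) (Q.prod P) :=
    hfm.prod_swap
  have hgm : AEStronglyMeasurable g Q := by
    simpa [hg] using hfswapm.integral_prod_right'
  have hhm : AEStronglyMeasurable h P := hfm.integral_prod_right'
  have hhi : Integrable h P := hfi.integral_prod_left
  have hfpm : AEMeasurable (fun z : α × β => ((‖f z‖₊ : ℝ≥0∞)) ^ p) ν :=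
    hfm.enorm.pow_const p
  have hfin_lint : ∫⁻ z, (‖f z‖₊ : ℝ≥0∞) ^ p ∂ν ≠ ⊤ := by
    have h2 := hf.2
    rw [eLpNorm_eq_lintegral_rpow_enorm_toReal hpe0 hpet, hpR] at h2
    intro hcon
    rw [show ∫⁻ x, ‖f x‖ₑ ^ p ∂ν = ⊤ from hcon, ENNReal.top_rpow_of_pos (by positivity)] at h2
    simp at h2
  -- slices in x (for a.e. y)
  have hmae_y : ∀ᵐ y ∂Q, AEStronglyMeasurable (fun x => f (x, y)) P := by
    simpa using hfswapm.prodMk_left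
  have hfin_y : ∀ᵐ y ∂Q, ∫⁻ x, (‖f (x, y)‖₊ : ℝ≥0∞) ^ p ∂P < ⊤ := by
    have hG : AEMeasurable (fun z : β × α => ((‖f z.swap‖₊ : ℝ≥0∞)) ^ p) (Q.prod P) :=
      hfpm.prod_swap
    have hGfin : ∫⁻ z, ((‖f z.swap‖₊ : ℝ≥0∞)) ^ p ∂(Q.prod P) ≠ ⊤ := by
      rw [lintegral_prod_swap (fun z : α × β => ((‖f z‖₊ : ℝ≥0∞)) ^ p)]
      exact hfin_lint
    simpa using ae_slice_lt_top hG hGfin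
  have hslice_y : ∀ᵐ y ∂Q, MemLp (fun x => f (x, y)) pe P := by
    filter_upwards [hmae_y, hfin_y] with y h1 h2
    refine ⟨h1, ?_⟩
    rw [eLpNorm_eq_lintegral_rpow_enorm_toReal hpe0 hpet, hpR]
    exact ENNReal.rpow_lt_top_of_nonneg (by positivity) h2.ne
  -- slices in y (for a.e. x)
  have hmae_x : ∀ᵐ x ∂P, AEStronglyMeasurable (fun y => f (x, y)) Q := hfm.prodMk_left
  have hfin_x : ∀ᵐ x ∂P, ∫⁻ y, (‖f (x, y)‖₊ : ℝ≥0∞) ^ p ∂Q < ⊤ :=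
    ae_slice_lt_top hfpm hfin_lint
  have hslice_x : ∀ᵐ x ∂P, MemLp (fun y => f (x, y)) pe Q := by
    filter_upwards [hmae_x, hfin_x] with x h1 h2
    refine ⟨h1, ?_⟩
    rw [eLpNorm_eq_lintegral_rpow_enorm_toReal hpe0 hpet, hpR]
    exact ENNReal.rpow_lt_top_of_nonneg (by positivity) h2.ne
  -- the first piece
  have hu_meas : AEStronglyMeasurable (fun z : α × β => f z - g z.2) ν :=
    hfm.sub hgm.comp_snd
  have hE2 : eLpNorm (fun z : α × β => f z - g z.2) pe ν ≤ ENNReal.ofReal A := by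
    rw [eLpNorm_eq_lintegral_rpow_enorm_toReal hpe0 hpet, hpR]
    have hmeasu : AEMeasurable (fun z : α × β => ((‖f z - g z.2‖₊ : ℝ≥0∞)) ^ p) ν :=
      hu_meas.enorm.pow_const p
    have hbound : ∫⁻ z, (‖f z - g z.2‖₊ : ℝ≥0∞) ^ p ∂ν ≤ ENNReal.ofReal (A ^ p) := by
      rw [lintegral_prod_symm _ hmeasu]
      calc ∫⁻ y, ∫⁻ x, (‖f (x, y) - g y‖₊ : ℝ≥0∞) ^ p ∂P ∂Q
          ≤ ∫⁻ _, ENNReal.ofReal (A ^ p) ∂Q := by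
            refine lintegral_mono_ae ?_
            filter_upwards [hslice_y, hA] with y hy hAy
            exact aux_lintegral_le hp0 (hy.sub (memLp_const _)) hAy
        _ = ENNReal.ofReal (A ^ p) := by simp
    calc (∫⁻ z, (‖f z - g z.2‖₊ : ℝ≥0∞) ^ p ∂ν) ^ (1 / p)
        ≤ (ENNReal.ofReal (A ^ p)) ^ (1 / p) :=
          ENNReal.rpow_le_rpow hbound (by positivity)
      _ = ENNReal.ofReal A := by
          rw [← ENNReal.ofReal_rpow_of_nonneg hA0 hp0.le, ← ENNReal.rpow_mul,
            mul_one_div_cancel hp0.ne', ENNReal.rpow_one]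
  -- the second piece
  have hc_eq : c = ∫ x, h x ∂P := integral_prod f hfi
  have hv_meas : AEStronglyMeasurable (fun z : α × β => g z.2 - c) ν :=
    hgm.comp_snd.sub aestronglyMeasurable_const
  have hw_meas : AEStronglyMeasurable (fun z : α × β => f z - h z.1) ν :=
    hfm.sub hhm.comp_fst
  have hgv : ∀ᵐ y ∂Q, ((‖g y - c‖₊ : ℝ≥0∞)) ^ p
      ≤ ∫⁻ x, (‖f (x, y) - h x‖₊ : ℝ≥0∞) ^ p ∂P := by
    filter_upwards [hslice_y] with y hy
    have hyint : Integrable (fun x => f (x, y)) P := hy.integrable hpe1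
    have heqy : g y - c = ∫ x, (f (x, y) - h x) ∂P := by
      rw [integral_sub hyint hhi, hc_eq]
    have hwm : AEStronglyMeasurable (fun x => f (x, y) - h x) P :=
      hy.aestronglyMeasurable.sub hhm
    calc ((‖g y - c‖₊ : ℝ≥0∞)) ^ p
        = (‖∫ x, (f (x, y) - h x) ∂P‖₊ : ℝ≥0∞) ^ p := by rw [heqy]
      _ ≤ (∫⁻ x, (‖f (x, y) - h x‖₊ : ℝ≥0∞) ∂P) ^ p :=
          ENNReal.rpow_le_rpow (enorm_integral_le_lintegral_enorm _) hp0.le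
      _ = (eLpNorm (fun x => f (x, y) - h x) 1 P) ^ p := by
          rw [eLpNorm_one_eq_lintegral_enorm]; rfl
      _ ≤ (eLpNorm (fun x => f (x, y) - h x) pe P) ^ p :=
          ENNReal.rpow_le_rpow (eLpNorm_le_eLpNorm_of_exponent_le hpe1 hwm) hp0.le
      _ = ∫⁻ x, (‖f (x, y) - h x‖₊ : ℝ≥0∞) ^ p ∂P := by
          rw [eLpNorm_eq_lintegral_rpow_enorm_toReal hpe0 hpet, hpR, ← ENNReal.rpow_mul,
            one_div_mul_cancel hp0.ne', ENNReal.rpow_one]; rfl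
  have hE3 : eLpNorm (fun z : α × β => g z.2 - c) pe ν ≤ ENNReal.ofReal B := by
    rw [eLpNorm_eq_lintegral_rpow_enorm_toReal hpe0 hpet, hpR]
    have hmeasv : AEMeasurable (fun z : α × β => ((‖g z.2 - c‖₊ : ℝ≥0∞)) ^ p) ν :=
      hv_meas.enorm.pow_const p
    have hmeasw : AEMeasurable (fun z : α × β => ((‖f z - h z.1‖₊ : ℝ≥0∞)) ^ p) ν :=
      hw_meas.enorm.pow_const p
    have hbound : ∫⁻ z, (‖g z.2 - c‖₊ : ℝ≥0∞) ^ p ∂ν ≤ ENNReal.ofReal (B ^ p) := by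
      rw [lintegral_prod_symm _ hmeasv]
      calc ∫⁻ y, ∫⁻ _, (‖g y - c‖₊ : ℝ≥0∞) ^ p ∂P ∂Q
          = ∫⁻ y, (‖g y - c‖₊ : ℝ≥0∞) ^ p ∂Q := by simp
        _ ≤ ∫⁻ y, ∫⁻ x, (‖f (x, y) - h x‖₊ : ℝ≥0∞) ^ p ∂P ∂Q := lintegral_mono_ae hgv
        _ = ∫⁻ z, (‖f z - h z.1‖₊ : ℝ≥0∞) ^ p ∂ν := (lintegral_prod_symm _ hmeasw).symm
        _ = ∫⁻ x, ∫⁻ y, (‖f (x, y) - h x‖₊ : ℝ≥0∞) ^ p ∂Q ∂P := lintegral_prod _ hmeasw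
        _ ≤ ∫⁻ _, ENNReal.ofReal (B ^ p) ∂P := by
            refine lintegral_mono_ae ?_
            filter_upwards [hslice_x, hB] with x hx hBx
            exact aux_lintegral_le hp0 (hx.sub (memLp_const _)) hBx
        _ = ENNReal.ofReal (B ^ p) := by simp
    calc (∫⁻ z, (‖g z.2 - c‖₊ : ℝ≥0∞) ^ p ∂ν) ^ (1 / p)
        ≤ (ENNReal.ofReal (B ^ p)) ^ (1 / p) :=
          ENNReal.rpow_le_rpow hbound (by positivity)
      _ = ENNReal.ofReal B := by
          rw [← ENNReal.ofReal_rpow_of_nonneg hB0 hp0.le, ← ENNReal.rpow_mul,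
            mul_one_div_cancel hp0.ne', ENNReal.rpow_one]
  -- combine
  have hsub : MemLp (fun z => f z - c) pe ν := hf.sub (memLp_const c)
  have htri : eLpNorm (fun z => f z - c) pe ν ≤ ENNReal.ofReal A + ENNReal.ofReal B := by
    have hdecomp : (fun z : α × β => f z - c) =
        (fun z : α × β => f z - g z.2) + fun z : α × β => g z.2 - c := by
      funext z; simp
    rw [hdecomp]
    exact le_trans (eLpNorm_add_le hu_meas hv_meas hpe1) (add_le_add hE2 hE3)
  have hgoal_eq : (∫ z, |f z - c| ^ p ∂ν) ^ (1 / p)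
      = (eLpNorm (fun z => f z - c) pe ν).toReal := by
    have hlin : ∫⁻ z, ENNReal.ofReal (|f z - c| ^ p) ∂ν
        = ∫⁻ z, (‖f z - c‖₊ : ℝ≥0∞) ^ p ∂ν := by
      refine lintegral_congr fun z => ?_
      rw [← ENNReal.ofReal_rpow_of_nonneg (abs_nonneg _) hp0.le, ← Real.norm_eq_abs,
        ofReal_norm, enorm_eq_nnnorm]
    have habs : AEStronglyMeasurable (fun z => |f z - c| ^ p) ν := by
      have h1 := (hsub.aestronglyMeasurable.norm.aemeasurable.pow_const p).aestronglyMeasurable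
      simpa [Real.norm_eq_abs] using h1
    rw [eLpNorm_eq_lintegral_rpow_enorm_toReal hpe0 hpet, hpR,
      integral_eq_lintegral_of_nonneg_ae
        (Filter.Eventually.of_forall fun z => Real.rpow_nonneg (abs_nonneg _) _) habs,
      hlin, ← ENNReal.toReal_rpow]; rfl
  rw [hgoal_eq]
  refine ENNReal.toReal_le_of_le_ofReal (by linarith) ?_
  rw [ENNReal.ofReal_add hA0 hB0]
  exact htri

/-- On `R = S × T`, if the `p`-mean oscillation of a.e. horizontal slice of
`f` over `S` is at most `A`, and of a.e. vertical slice over `T` is at most `B`, then the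
`p`-mean oscillation of `f` over `R` is at most `A + B`. -/
theorem stmt_19 (m l : ℕ) (p : ℝ) (hp : 1 ≤ p)
    (S : Set (EuclideanSpace ℝ (Fin m))) (T : Set (EuclideanSpace ℝ (Fin l)))
    (hSm : MeasurableSet S) (hTm : MeasurableSet T)
    (hS0 : 0 < volume S) (hSfin : volume S < ⊤)
    (hT0 : 0 < volume T) (hTfin : volume T < ⊤)
    (f : EuclideanSpace ℝ (Fin m) × EuclideanSpace ℝ (Fin l) → ℝ)
    (hf : MemLp f (ENNReal.ofReal p) (volume.restrict (S ×ˢ T)))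
    (A B : ℝ)
    (hA : ∀ᵐ y ∂(volume.restrict T),
      (⨍ x in S, |f (x, y) - ⨍ x' in S, f (x', y)| ^ p) ^ (1 / p) ≤ A)
    (hB : ∀ᵐ x ∂(volume.restrict S),
      (⨍ y in T, |f (x, y) - ⨍ y' in T, f (x, y')| ^ p) ^ (1 / p) ≤ B) :
    (⨍ z in S ×ˢ T, |f z - ⨍ w in S ×ˢ T, f w| ^ p) ^ (1 / p) ≤ A + B := by
  set P : Measure (EuclideanSpace ℝ (Fin m)) := (volume S)⁻¹ • volume.restrict S with hP
  set Q : Measure (EuclideanSpace ℝ (Fin l)) := (volume T)⁻¹ • volume.restrict T with hQ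
  haveI hPprob : IsProbabilityMeasure P := ⟨by
    rw [hP, Measure.smul_apply, Measure.restrict_apply_univ, smul_eq_mul,
      ENNReal.inv_mul_cancel hS0.ne' hSfin.ne]⟩
  haveI hQprob : IsProbabilityMeasure Q := ⟨by
    rw [hQ, Measure.smul_apply, Measure.restrict_apply_univ, smul_eq_mul,
      ENNReal.inv_mul_cancel hT0.ne' hTfin.ne]⟩
  have hrt : volume.restrict (S ×ˢ T)
      = (volume.restrict S).prod (volume.restrict T) := by
    rw [Measure.volume_eq_prod, Measure.prod_restrict]
  have hST : volume (S ×ˢ T) = volume S * volume T := by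
    rw [Measure.volume_eq_prod, Measure.prod_prod]
  have hprod : P.prod Q = (volume (S ×ˢ T))⁻¹ • volume.restrict (S ×ˢ T) := by
    ext u hu
    rw [Measure.prod_apply hu, Measure.smul_apply, hrt, Measure.prod_apply hu]
    simp only [hP, hQ, Measure.smul_apply, smul_eq_mul]
    rw [lintegral_smul_measure, lintegral_const_mul' _ _
      (ENNReal.inv_ne_top.mpr hT0.ne'), hST,
      ENNReal.mul_inv (Or.inl hS0.ne') (Or.inl hSfin.ne)]
    ring
  have hSTinv : (volume (S ×ˢ T))⁻¹ ≠ ⊤ := by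
    rw [hST]
    exact ENNReal.inv_ne_top.mpr (ENNReal.mul_pos hS0.ne' hT0.ne').ne'
  have hf' : MemLp f (ENNReal.ofReal p) (P.prod Q) := by
    rw [hprod]
    exact hf.smul_measure hSTinv
  simp only [setAverage_eq'] at hA hB ⊢
  rw [← hprod]
  exact key_prob P Q hp f hf' (Measure.ae_smul_measure hA _) (Measure.ae_smul_measure hB _)
end
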